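/- arXiv:1512.03199 — 2 statements merged into one kernel-verified Lean document; each statement's English description precedes it below -/
import Mathlib

section
/- Let G = (V,E) be a finite self-loopless directed graph and I ⊆ V. Then I fills V if and only if A(G) ⊆ I and I intersects every minimal cycle of G (a cycle containing no other cycle as a proper subset). -/
/-- Incoming vertices of `v` w.r.t. edge relation `E`. -/
def inSet {V : Type*} (E : V → V → Prop) (v : V) : Set V := {w | E w v}

/-- Vertices (completely) determined by `S`. -/
def Dtm {V : Type*} (E : V → V → Prop) (S : Set V) : Set V :=
  {v | (inSet E v).Nonempty ∧ inSet E v ⊆ S}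

/-- Iterated determination closure. -/
def dcl {V : Type*} (E : V → V → Prop) (I : Set V) : ℕ → Set V
  | 0 => I
  | n + 1 => dcl E I n ∪ Dtm E (dcl E I n)

/-- `I` fills the vertex set. -/
def Fills {V : Type*} (E : V → V → Prop) (I : Set V) : Prop :=
  ∃ n, dcl E I n = Set.univ

/-- `C` is (the vertex image of) a directed closed walk of positive length. -/
def IsCycle {V : Type*} (E : V → V → Prop) (C : Set V) : Prop :=
  ∃ (n : ℕ) (p : ℕ → V), 1 ≤ n ∧ p 0 = p n ∧ (∀ k < n, E (p k) (p (k + 1))) ∧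
    C = p '' {k | k ≤ n}

/-- A cycle containing no other cycle as a proper subset. -/
def MinCycle {V : Type*} (E : V → V → Prop) (C : Set V) : Prop :=
  IsCycle E C ∧ ∀ C' ⊆ C, IsCycle E C' → C' = C

/-- Every vertex of a cycle has a predecessor in the cycle. -/
lemma cycle_pred {V : Type*} {E : V → V → Prop} {C : Set V} (h : IsCycle E C) :
    ∀ v ∈ C, ∃ w ∈ C, E w v := by
  obtain ⟨n, p, hn, hcl, he, rfl⟩ := h
  rintro v ⟨k, hk, rfl⟩
  simp only [Set.mem_setOf_eq] at hk
  rcases Nat.eq_zero_or_pos k with rfl | hkpos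
  · refine ⟨p (n - 1), ⟨n - 1, Set.mem_setOf_eq ▸ by omega, rfl⟩, ?_⟩
    have := he (n - 1) (by omega)
    rwa [show n - 1 + 1 = n by omega, ← hcl] at this
  · refine ⟨p (k - 1), ⟨k - 1, Set.mem_setOf_eq ▸ by omega, rfl⟩, ?_⟩
    have := he (k - 1) (by omega)
    rwa [show k - 1 + 1 = k by omega] at this

theorem chara1_minimal {V : Type*} [Fintype V] (E : V → V → Prop)
    (hloopless : ∀ v, ¬ E v v) (I : Set V) :
    Fills E I ↔
      ({v : V | inSet E v = ∅} ⊆ I ∧ ∀ C : Set V, MinCycle E C → (C ∩ I).Nonempty) := by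
  classical
  constructor
  · rintro ⟨n, hn⟩
    constructor
    · -- sources are in I
      intro v hv
      have key : ∀ m, v ∈ dcl E I m → v ∈ I := by
        intro m
        induction m with
        | zero => exact fun h => h
        | succ m ih =>
          rintro (h | ⟨⟨w, hw⟩, _⟩)
          · exact ih h
          · exact absurd hw (by simp [Set.eq_empty_iff_forall_notMem] at hv; exact hv w)
      exact key n (hn ▸ Set.mem_univ v)
    · -- cycles meet I (any cycle, in particular minimal ones)
      intro C hC
      by_contra hdisj
      rw [Set.not_nonempty_iff_eq_empty] at hdisj
      have key : ∀ m, C ∩ dcl E I m = ∅ := by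
        intro m
        induction m with
        | zero => exact hdisj
        | succ m ih =>
          rw [Set.eq_empty_iff_forall_notMem] at ih ⊢
          rintro v ⟨hvC, (h | ⟨_, hsub⟩)⟩
          · exact ih v ⟨hvC, h⟩
          · obtain ⟨w, hwC, hwE⟩ := cycle_pred hC.1 v hvC
            exact ih w ⟨hwC, hsub hwE⟩
      obtain ⟨k, p, hk, _, _, hCeq⟩ := hC.1
      have hv : p 0 ∈ C := hCeq ▸ ⟨0, by simp, rfl⟩
      have := key n
      rw [hn, Set.inter_univ] at this
      exact (Set.eq_empty_iff_forall_notMem.mp this) (p 0) hv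
  · rintro ⟨hsrc, hcyc⟩
    -- dcl is monotone and stabilizes
    have hmono : ∀ m, dcl E I m ⊆ dcl E I (m + 1) := fun m => Set.subset_union_left
    have hstab : ∃ N, dcl E I (N + 1) = dcl E I N := by
      by_contra h
      push_neg at h
      have hstrict : ∀ m, (dcl E I m).ncard < (dcl E I (m + 1)).ncard := by
        intro m
        exact Set.ncard_lt_ncard (HasSubset.Subset.ssubset_of_ne (hmono m)
          (fun heq => h m heq.symm)) (Set.toFinite _)
      have hge : ∀ m, m ≤ (dcl E I m).ncard := by
        intro m
        induction m with
        | zero => exact Nat.zero_le _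
        | succ m ih => exact Nat.lt_of_le_of_lt ih (hstrict m)
      have h1 := hge (Fintype.card V + 1)
      have h2 : (dcl E I (Fintype.card V + 1)).ncard ≤ Fintype.card V := by
        have := Set.ncard_le_ncard (Set.subset_univ (dcl E I (Fintype.card V + 1)))
          Set.finite_univ
        simpa [Set.ncard_univ] using this
      omega
    obtain ⟨N, hN⟩ := hstab
    have hDtm : Dtm E (dcl E I N) ⊆ dcl E I N := by
      intro v hv
      have : v ∈ dcl E I (N + 1) := Or.inr hv
      rwa [hN] at this
    -- claim dcl N = univ
    refine ⟨N, ?_⟩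
    by_contra hne
    -- S = complement, nonempty
    set D := dcl E I N with hD
    have hI : I ⊆ D := by
      have : ∀ m, I ⊆ dcl E I m := by
        intro m; induction m with
        | zero => exact le_refl _
        | succ m ih => exact ih.trans (hmono m)
      exact this N
    have hSne : Dᶜ.Nonempty := by
      rw [Set.nonempty_compl]; exact hne
    -- every vertex of S has a predecessor in S
    have hpred : ∀ v ∈ Dᶜ, ∃ w ∈ Dᶜ, E w v := by
      intro v hv
      have hne' : (inSet E v).Nonempty := by
        rcases Set.eq_empty_or_nonempty (inSet E v) with h | h
        · exact absurd (hI (hsrc h)) hv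
        · exact h
      by_contra h
      push_neg at h
      have hsub : inSet E v ⊆ D := by
        intro w hw
        by_contra hwD
        exact h w hwD hw
      exact hv (hDtm ⟨hne', hsub⟩)
    -- build a cycle inside S by following predecessors
    obtain ⟨v0, hv0⟩ := hSne
    choose f hf1 hf2 using hpred
    let F : V → V := fun w => if h : w ∈ Dᶜ then f w h else w
    let g : ℕ → V := fun k => F^[k] v0
    have hgS : ∀ k, g k ∈ Dᶜ := by
      intro k
      induction k with
      | zero => exact hv0
      | succ k ih =>
        show F^[k + 1] v0 ∈ Dᶜ
        rw [Function.iterate_succ_apply']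
        show F (g k) ∈ Dᶜ
        simp only [F, dif_pos ih]
        exact hf1 _ ih
    have hgE : ∀ k, E (g (k + 1)) (g k) := by
      intro k
      show E (F^[k + 1] v0) (g k)
      rw [Function.iterate_succ_apply']
      show E (F (g k)) (g k)
      simp only [F, dif_pos (hgS k)]
      exact hf2 _ (hgS k)
    obtain ⟨i, j, hij, hgij⟩ : ∃ i j, i < j ∧ g i = g j := by
      have : ¬ Function.Injective g := by
        intro hinj
        exact (Finite.of_injective g hinj).false
      rw [Function.not_injective_iff] at this
      obtain ⟨a, b, hab, hne'⟩ := this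
      rcases lt_or_gt_of_ne hne' with h | h
      · exact ⟨a, b, h, hab⟩
      · exact ⟨b, a, h, hab.symm⟩
    -- the cycle C0
    set p : ℕ → V := fun k => g (j - k) with hp
    have hC0 : IsCycle E (p '' {k | k ≤ j - i}) := by
      refine ⟨j - i, p, by omega, ?_, ?_, rfl⟩
      · simp only [hp, Nat.sub_zero, Nat.sub_sub_self (le_of_lt hij)]
        exact hgij.symm
      · intro k hk
        have h1 : j - k = (j - (k + 1)) + 1 := by omega
        simp only [hp, h1]
        exact hgE _
    -- pick a minimal-cardinality cycle inside C0
    set C0 := p '' {k | k ≤ j - i} with hC0def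
    have hC0S : C0 ⊆ Dᶜ := by
      rintro _ ⟨k, _, rfl⟩
      exact hgS _
    set T : Set ℕ := {m | ∃ C', C' ⊆ C0 ∧ IsCycle E C' ∧ C'.ncard = m} with hT
    have hTne : T.Nonempty := ⟨C0.ncard, C0, le_refl _, hC0, rfl⟩
    obtain ⟨m0, ⟨C', hC'sub, hC'cyc, hC'card⟩, hmin⟩ :=
      Nat.lt_wfRel.wf.has_min T hTne
    have hminC : MinCycle E C' := by
      refine ⟨hC'cyc, ?_⟩
      intro C'' hsub'' hcyc''
      have hle : C'.ncard ≤ C''.ncard := by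
        by_contra hlt
        push_neg at hlt
        rw [hC'card] at hlt
        exact hmin C''.ncard ⟨C'', hsub''.trans hC'sub, hcyc'', rfl⟩ hlt
      exact Set.eq_of_subset_of_ncard_le hsub'' hle (Set.toFinite _)
    obtain ⟨x, hxC, hxI⟩ := hcyc C' hminC
    exact hC0S (hC'sub hxC) (hI hxI)
end

section
/- Let G = (V,E) be a finite self-loopless directed graph. Then all minimal (with respect to inclusion) p-filling subsets of V have the same cardinality, equal to the number of strongly connected components of G with no incoming edges in the condensation G/≃; moreover every minimal p-filling subset intersects each such component in exactly one vertex. -/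
/-- Vertices p-determined by `S`. -/
def pDtm {V : Type*} (E : V → V → Prop) (S : Set V) : Set V :=
  {v | (inSet E v ∩ S).Nonempty}

/-- Iterated p-determination closure. -/
def pdcl {V : Type*} (E : V → V → Prop) (I : Set V) : ℕ → Set V
  | 0 => I
  | n + 1 => pdcl E I n ∪ pDtm E (pdcl E I n)

/-- `I` p-fills the vertex set. -/
def PFills {V : Type*} (E : V → V → Prop) (I : Set V) : Prop :=
  ∃ n, pdcl E I n = Set.univ

/-- `x` and `y` are strongly connected. -/
def SConn {V : Type*} (E : V → V → Prop) (x y : V) : Prop :=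
  Relation.ReflTransGen E x y ∧ Relation.ReflTransGen E y x

/-- `C` is a strongly connected component, i.e. an equivalence class of `SConn`. -/
def IsSCC {V : Type*} (E : V → V → Prop) (C : Set V) : Prop :=
  ∃ x : V, C = {y | SConn E x y}

/-- Edge relation of the condensation graph, on strongly connected components. -/
def sccEdge {V : Type*} (E : V → V → Prop) (C D : Set V) : Prop :=
  IsSCC E C ∧ IsSCC E D ∧ C ≠ D ∧ ∃ c ∈ C, ∃ d ∈ D, E c d

/-- A p-filling set none of whose proper subsets is p-filling. -/
def MinPFilling {V : Type*} (E : V → V → Prop) (I : Set V) : Prop :=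
  PFills E I ∧ ∀ J ⊂ I, ¬ PFills E J

section Aux

open Relation

variable {V : Type*} (E : V → V → Prop)

lemma pdcl_mono' {I : Set V} {n m : ℕ} (h : n ≤ m) : pdcl E I n ⊆ pdcl E I m := by
  induction h with
  | refl => exact subset_rfl
  | step _ ih => exact ih.trans Set.subset_union_left

lemma reach_of_mem_pdcl {I : Set V} : ∀ {n : ℕ} {v : V}, v ∈ pdcl E I n →
    ∃ i ∈ I, ReflTransGen E i v := by
  intro n
  induction n with
  | zero => intro v hv; exact ⟨v, hv, ReflTransGen.refl⟩
  | succ n ih =>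
    intro v hv
    rcases hv with hv | hv
    · exact ih hv
    · obtain ⟨w, hw1, hw2⟩ := hv
      obtain ⟨i, hi, hr⟩ := ih hw2
      exact ⟨i, hi, hr.tail hw1⟩

lemma mem_pdcl_of_reach {I : Set V} {i v : V} (hi : i ∈ I) (h : ReflTransGen E i v) :
    ∃ n, v ∈ pdcl E I n := by
  induction h with
  | refl => exact ⟨0, hi⟩
  | tail _ e ih =>
    obtain ⟨n, hn⟩ := ih
    exact ⟨n + 1, Or.inr ⟨_, e, hn⟩⟩

lemma pfills_iff [Fintype V] {I : Set V} :
    PFills E I ↔ ∀ v, ∃ i ∈ I, ReflTransGen E i v := by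
  constructor
  · rintro ⟨n, hn⟩ v
    exact reach_of_mem_pdcl E (show v ∈ pdcl E I n by rw [hn]; trivial)
  · intro h
    have h' : ∀ v : V, ∃ n, v ∈ pdcl E I n := by
      intro v
      obtain ⟨i, hi, hr⟩ := h v
      exact mem_pdcl_of_reach E hi hr
    choose f hf using h'
    refine ⟨Finset.univ.sup f, ?_⟩
    ext v
    simp only [Set.mem_univ, iff_true]
    exact pdcl_mono' E (Finset.le_sup (Finset.mem_univ v)) (hf v)

lemma sconn_refl (x : V) : SConn E x x := ⟨ReflTransGen.refl, ReflTransGen.refl⟩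

lemma sconn_symm {x y : V} (h : SConn E x y) : SConn E y x := ⟨h.2, h.1⟩

lemma sconn_trans {x y z : V} (h1 : SConn E x y) (h2 : SConn E y z) : SConn E x z :=
  ⟨h1.1.trans h2.1, h2.2.trans h1.2⟩

lemma scc_eq {x v : V} (h : SConn E x v) :
    {y | SConn E x y} = {y | SConn E v y} := by
  ext y
  exact ⟨fun hy => sconn_trans E (sconn_symm E h) hy, fun hy => sconn_trans E h hy⟩

lemma mem_source_of_reach {C : Set V} (hC : ∀ x ∉ C, ∀ c ∈ C, ¬ E x c)
    {u v : V} (h : ReflTransGen E u v) (hv : v ∈ C) : u ∈ C := by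
  induction h using Relation.ReflTransGen.head_induction_on with
  | refl => exact hv
  | head e _ ih =>
    by_contra hu
    exact hC _ hu _ ih e

lemma exists_source_reach [Fintype V] (v : V) :
    ∃ u, ReflTransGen E u v ∧
      ∀ x ∉ {y | SConn E u y}, ∀ c ∈ {y | SConn E u y}, ¬ E x c := by
  have key : ∀ n (v : V), ({u | ReflTransGen E u v}).ncard ≤ n →
      ∃ u, ReflTransGen E u v ∧
        ∀ x ∉ {y | SConn E u y}, ∀ c ∈ {y | SConn E u y}, ¬ E x c := by
    intro n
    induction n with
    | zero =>
      intro v hcard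
      exfalso
      have : v ∈ {u | ReflTransGen E u v} := ReflTransGen.refl
      have hpos : 0 < ({u | ReflTransGen E u v}).ncard :=
        (Set.ncard_pos (Set.toFinite _)).mpr ⟨v, this⟩
      omega
    | succ n ih =>
      intro v hcard
      by_cases h : ∀ x ∉ {y | SConn E v y}, ∀ c ∈ {y | SConn E v y}, ¬ E x c
      · exact ⟨v, ReflTransGen.refl, h⟩
      · push_neg at h
        obtain ⟨x, hx, c, hc, e⟩ := h
        have hxv : ReflTransGen E x v := (ReflTransGen.single e).trans hc.2
        have hvx : ¬ ReflTransGen E v x := fun hr => hx ⟨hr, hxv⟩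
        have hsub : {u | ReflTransGen E u x} ⊂ {u | ReflTransGen E u v} := by
          rw [Set.ssubset_def]
          refine ⟨fun u hu => Relation.ReflTransGen.trans hu hxv, fun hss => ?_⟩
          exact hvx (hss ReflTransGen.refl)
        have hc2 : ({u | ReflTransGen E u x}).ncard ≤ n := by
          have := Set.ncard_lt_ncard hsub (Set.toFinite _)
          omega
        obtain ⟨u, hu, hsrc⟩ := ih x hc2
        exact ⟨u, hu.trans hxv, hsrc⟩
  exact key _ v le_rfl

end Aux

theorem minimal_pfilling_cardinality {V : Type*} [Fintype V] (E : V → V → Prop)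
    (hloopless : ∀ v, ¬ E v v) (I : Set V) (hI : MinPFilling E I) :
    I.ncard = {C : Set V | IsSCC E C ∧ ∀ x ∉ C, ∀ c ∈ C, ¬ E x c}.ncard ∧
      ∀ C : Set V, IsSCC E C → (∀ x ∉ C, ∀ c ∈ C, ¬ E x c) → (I ∩ C).ncard = 1 := by
  classical
  obtain ⟨hfillP, hmin⟩ := hI
  have hfill := (pfills_iff E).mp hfillP
  -- Step 1: every source SCC meets I
  have step1 : ∀ C : Set V, IsSCC E C → (∀ x ∉ C, ∀ c ∈ C, ¬ E x c) →
      ∃ i ∈ I, i ∈ C := by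
    rintro C ⟨x, rfl⟩ hsrc
    obtain ⟨i, hi, hr⟩ := hfill x
    exact ⟨i, hi, mem_source_of_reach E hsrc hr (sconn_refl E x)⟩
  -- minimality tool: cannot remove any vertex that is reached from another vertex of I
  have hJfill : ∀ v ∈ I, ¬ (∃ j ∈ I, j ≠ v ∧ Relation.ReflTransGen E j v) := by
    rintro v hv ⟨j, hj, hne, hr⟩
    refine hmin (I \ {v}) ?_ ?_
    · rw [Set.ssubset_def]
      exact ⟨Set.diff_subset, fun hss => (hss hv).2 rfl⟩
    · rw [pfills_iff]
      intro w
      obtain ⟨i, hi, hiw⟩ := hfill w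
      by_cases h : i = v
      · exact ⟨j, ⟨hj, hne⟩, hr.trans (h ▸ hiw)⟩
      · exact ⟨i, ⟨hi, h⟩, hiw⟩
  -- Step 2a: every vertex of I lies in a source SCC
  have step2a : ∀ v ∈ I, ∀ x ∉ {y | SConn E v y}, ∀ c ∈ {y | SConn E v y}, ¬ E x c := by
    intro v hv
    by_contra h
    obtain ⟨u, hur, husrc⟩ := exists_source_reach E v
    obtain ⟨i, hi, hiC⟩ := step1 _ ⟨u, rfl⟩ husrc
    have hiv : Relation.ReflTransGen E i v := hiC.2.trans hur
    have hne : i ≠ v := by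
      rintro rfl
      apply h
      rw [show {y | SConn E i y} = {y | SConn E u y} from (scc_eq E hiC).symm]
      exact husrc
    exact hJfill v hv ⟨i, hi, hne, hiv⟩
  -- Step 2b: I meets each source SCC in at most one vertex
  have step2b : ∀ C : Set V, IsSCC E C → (∀ x ∉ C, ∀ c ∈ C, ¬ E x c) →
      ∀ i₁, i₁ ∈ I → i₁ ∈ C → ∀ i₂, i₂ ∈ I → i₂ ∈ C → i₁ = i₂ := by
    rintro C ⟨x, rfl⟩ hsrc i₁ h1I h1C i₂ h2I h2C
    by_contra hne
    exact hJfill i₂ h2I ⟨i₁, h1I, hne, h1C.2.trans h2C.1⟩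
  -- conclusion part 2
  have part2 : ∀ C : Set V, IsSCC E C → (∀ x ∉ C, ∀ c ∈ C, ¬ E x c) →
      (I ∩ C).ncard = 1 := by
    intro C hscc hsrc
    obtain ⟨i, hiI, hiC⟩ := step1 C hscc hsrc
    rw [Set.ncard_eq_one]
    refine ⟨i, ?_⟩
    ext j
    constructor
    · rintro ⟨hjI, hjC⟩
      exact step2b C hscc hsrc j hjI hjC i hiI hiC
    · rintro rfl
      exact ⟨hiI, hiC⟩
  refine ⟨?_, part2⟩
  -- cardinality via the image under v ↦ SCC(v)
  set f : V → Set V := fun v => {y | SConn E v y} with hf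
  have himg : f '' I = {C : Set V | IsSCC E C ∧ ∀ x ∉ C, ∀ c ∈ C, ¬ E x c} := by
    ext C
    constructor
    · rintro ⟨v, hv, rfl⟩
      exact ⟨⟨v, rfl⟩, step2a v hv⟩
    · rintro ⟨hscc, hsrc⟩
      obtain ⟨i, hiI, hiC⟩ := step1 C hscc hsrc
      refine ⟨i, hiI, ?_⟩
      obtain ⟨x, rfl⟩ := hscc
      exact (scc_eq E hiC).symm
  have hinj : Set.InjOn f I := by
    intro v₁ hv₁ v₂ hv₂ hfe
    have hv₁C : v₁ ∈ f v₁ := sconn_refl E v₁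
    have hv₂C : v₂ ∈ f v₁ := by
      rw [hfe]; exact sconn_refl E v₂
    exact step2b (f v₁) ⟨v₁, rfl⟩ (step2a v₁ hv₁) v₁ hv₁ hv₁C v₂ hv₂ hv₂C
  rw [← himg, Set.ncard_image_of_injOn hinj]
end
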